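/- (Sufficient decrease lemma.) Let W be a symmetric real N×N matrix, ρ ∈ ℝ, set F(X;ρ) = Tr(X (W − (ρ/2)I) Xᵀ) + Nρ/2 and L = ‖2W − ρI‖_F, and let 0 < t < 1/(L+1). Let X ∈ Δ_k^N have all entries strictly positive and suppose X⁺ ∈ Δ_k^N has all entries strictly positive and minimizes Y ↦ ⟨X(2W − ρI), Y⟩ + (1/t) KL(Y, X) over Δ_k^N, where ⟨A, B⟩ = Tr(AᵀB). Then F(X⁺;ρ) ≤ F(X;ρ) − (1/t − L) · KL(X⁺, X). -/

import Mathlib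

open Matrix

lemma kl_pointwise {x y : ℝ} (hx : 0 < x) (hx1 : x ≤ 1) (hy : 0 < y) (hy1 : y ≤ 1) :
    x - y + (x - y)^2 / 2 ≤ x * Real.log (x / y) := by
  set h : ℝ → ℝ := fun z => z * Real.log z - z * Real.log y - (z - y) - (z - y)^2/2 with hh
  have hderiv : ∀ z : ℝ, 0 < z → HasDerivAt h (Real.log z - Real.log y - (z - y)) z := by
    intro z hz
    have h1 := Real.hasDerivAt_mul_log hz.ne'
    have h2 : HasDerivAt (fun z : ℝ => z * Real.log y) (Real.log y) z :=
      (hasDerivAt_id z).mul_const _ |>.congr_deriv (by ring)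
    have h3 : HasDerivAt (fun z : ℝ => z - y) 1 z := (hasDerivAt_id z).sub_const _
    have h4 : HasDerivAt (fun z : ℝ => (z - y)^2/2) (z - y) z := by
      have := (h3.pow 2).div_const 2
      norm_num at this
      exact this
    have := ((h1.sub h2).sub h3).sub h4
    convert this using 1
    exacts [rfl, rfl, rfl, by ring]
  have hhy : h y = 0 := by simp [hh]
  have key : 0 ≤ h x := by
    rcases le_total x y with hxy | hxy
    · have hanti : AntitoneOn h (Set.Icc x y) := by
        apply antitoneOn_of_deriv_nonpos (convex_Icc x y)
        · intro z hz
          exact (hderiv z (lt_of_lt_of_le hx hz.1)).continuousAt.continuousWithinAt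
        · intro z hz
          rw [interior_Icc] at hz
          exact (hderiv z (lt_trans hx hz.1)).differentiableAt.differentiableWithinAt
        · intro z hz
          rw [interior_Icc] at hz
          have hz0 : 0 < z := lt_trans hx hz.1
          rw [(hderiv z hz0).deriv]
          have hlog : Real.log (z/y) ≤ z/y - 1 := Real.log_le_sub_one_of_pos (div_pos hz0 hy)
          have hlogneg : Real.log (z/y) ≤ 0 :=
            Real.log_nonpos (by positivity) ((div_le_one hy).2 hz.2.le)
          rw [Real.log_div hz0.ne' hy.ne'] at hlog hlogneg
          have e1 : y * (z/y - 1) = z - y := by field_simp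
          have e2 : y * (Real.log z - Real.log y) ≤ z - y := by
            rw [← e1]; exact mul_le_mul_of_nonneg_left hlog hy.le
          nlinarith [mul_nonneg (sub_nonneg.2 hy1) (neg_nonneg.2 hlogneg)]
      have := hanti (Set.left_mem_Icc.2 hxy) (Set.right_mem_Icc.2 hxy) hxy
      rw [hhy] at this; exact this
    · have hmono : MonotoneOn h (Set.Icc y x) := by
        apply monotoneOn_of_deriv_nonneg (convex_Icc y x)
        · intro z hz
          exact (hderiv z (lt_of_lt_of_le hy hz.1)).continuousAt.continuousWithinAt
        · intro z hz
          rw [interior_Icc] at hz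
          exact (hderiv z (lt_trans hy hz.1)).differentiableAt.differentiableWithinAt
        · intro z hz
          rw [interior_Icc] at hz
          have hz0 : 0 < z := lt_trans hy hz.1
          have hz1 : z ≤ 1 := hz.2.le.trans hx1
          rw [(hderiv z hz0).deriv]
          have hlog : Real.log (y/z) ≤ y/z - 1 := Real.log_le_sub_one_of_pos (div_pos hy hz0)
          rw [Real.log_div hy.ne' hz0.ne'] at hlog
          have e1 : (z - y)/z = 1 - y/z := by field_simp
          have h5 : (z - y)/z ≤ Real.log z - Real.log y := by rw [e1]; linarith
          have h6 : z - y ≤ (z - y)/z := by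
            rw [le_div_iff₀ hz0]
            nlinarith [hz.1]
          linarith
      have := hmono (Set.left_mem_Icc.2 hxy) (Set.right_mem_Icc.2 hxy) hxy
      rw [hhy] at this; exact this
  rw [Real.log_div hx.ne' hy.ne']
  simp only [hh] at key
  nlinarith [key]

lemma cs_bound {N k : ℕ} (A : Matrix (Fin N) (Fin N) ℝ) (D : Matrix (Fin k) (Fin N) ℝ) :
    ∑ j, ∑ l, A j l * (∑ i, D i j * D i l)
      ≤ Real.sqrt (∑ j, ∑ l, (A j l)^2) * ∑ i, ∑ j, (D i j)^2 := by
  set S := ∑ i, ∑ j, (D i j)^2 with hS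
  have hS0 : 0 ≤ S := by positivity
  have hM2 : ∑ j, ∑ l, (∑ i, D i j * D i l)^2 ≤ S^2 := by
    have h1 : ∀ j l : Fin N, (∑ i, D i j * D i l)^2 ≤ (∑ i, (D i j)^2) * (∑ i, (D i l)^2) :=
      fun j l => Finset.sum_mul_sq_le_sq_mul_sq _ _ _
    calc ∑ j, ∑ l, (∑ i, D i j * D i l)^2
        ≤ ∑ j, ∑ l, (∑ i, (D i j)^2) * (∑ i, (D i l)^2) := by
          exact Finset.sum_le_sum fun j _ => Finset.sum_le_sum fun l _ => h1 j l
      _ = (∑ j, ∑ i, (D i j)^2) * (∑ l, ∑ i, (D i l)^2) := by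
          rw [Finset.sum_mul_sum]
      _ = S^2 := by rw [Finset.sum_comm]; ring
  have hcs := Finset.sum_mul_sq_le_sq_mul_sq (Finset.univ ×ˢ Finset.univ)
      (fun p : Fin N × Fin N => A p.1 p.2) (fun p => ∑ i, D i p.1 * D i p.2)
  rw [Finset.sum_product, Finset.sum_product, Finset.sum_product] at hcs
  have h2 : ∑ j, ∑ l, A j l * (∑ i, D i j * D i l)
      ≤ Real.sqrt ((∑ j, ∑ l, (A j l)^2) * (∑ j, ∑ l, (∑ i, D i j * D i l)^2)) := by
    calc ∑ j, ∑ l, A j l * (∑ i, D i j * D i l)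
        ≤ |∑ j, ∑ l, A j l * (∑ i, D i j * D i l)| := le_abs_self _
      _ = Real.sqrt ((∑ j, ∑ l, A j l * (∑ i, D i j * D i l))^2) := (Real.sqrt_sq_eq_abs _).symm
      _ ≤ _ := Real.sqrt_le_sqrt hcs
  have h3 : Real.sqrt ((∑ j, ∑ l, (A j l)^2) * (∑ j, ∑ l, (∑ i, D i j * D i l)^2))
      ≤ Real.sqrt (∑ j, ∑ l, (A j l)^2) * S := by
    rw [Real.sqrt_mul (by positivity)]
    apply mul_le_mul_of_nonneg_left _ (Real.sqrt_nonneg _)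
    calc Real.sqrt (∑ j, ∑ l, (∑ i, D i j * D i l)^2) ≤ Real.sqrt (S^2) :=
          Real.sqrt_le_sqrt hM2
      _ = S := Real.sqrt_sq hS0
  linarith

lemma trace_mul_transpose {N k : ℕ} (M D : Matrix (Fin k) (Fin N) ℝ) :
    Matrix.trace (M * Dᵀ) = ∑ i, ∑ j, M i j * D i j := by
  simp [Matrix.trace, Matrix.diag, Matrix.mul_apply]

lemma trace_quad {N k : ℕ} (B : Matrix (Fin N) (Fin N) ℝ) (D : Matrix (Fin k) (Fin N) ℝ) :
    Matrix.trace (D * B * Dᵀ) = ∑ j, ∑ l, B j l * (∑ i, D i j * D i l) := by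
  calc Matrix.trace (D * B * Dᵀ)
      = ∑ i, ∑ l, ∑ j, D i j * B j l * D i l := by
        simp [Matrix.trace, Matrix.diag, Matrix.mul_apply, Finset.sum_mul]
    _ = ∑ l, ∑ i, ∑ j, D i j * B j l * D i l := Finset.sum_comm
    _ = ∑ l, ∑ j, ∑ i, D i j * B j l * D i l :=
        Finset.sum_congr rfl fun l _ => Finset.sum_comm
    _ = ∑ j, ∑ l, ∑ i, D i j * B j l * D i l := Finset.sum_comm
    _ = ∑ j, ∑ l, B j l * (∑ i, D i j * D i l) := by
        apply Finset.sum_congr rfl; intro j _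
        apply Finset.sum_congr rfl; intro l _
        rw [Finset.mul_sum]
        apply Finset.sum_congr rfl; intro i _
        ring

/-- **Sufficient decrease lemma.** Let `W` be a symmetric real `N×N` matrix, `ρ ∈ ℝ`,
`F(X;ρ) = Tr(X (W − (ρ/2)I) Xᵀ) + Nρ/2`, `L = ‖2W − ρI‖_F`, and `0 < t < 1/(L+1)`.
Let `X ∈ Δ_k^N` be entrywise strictly positive, and suppose `X⁺ ∈ Δ_k^N` is entrywise
strictly positive and minimizes `Y ↦ ⟨X(2W − ρI), Y⟩ + (1/t) KL(Y, X)` over `Δ_k^N`.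
Then `F(X⁺;ρ) ≤ F(X;ρ) − (1/t − L) · KL(X⁺, X)`. -/
theorem sufficient_decrease (k N : ℕ) (W : Matrix (Fin N) (Fin N) ℝ)
    (hW : W.IsSymm) (ρ t : ℝ) (ht0 : 0 < t)
    (ht1 : t < 1 / (Real.sqrt (∑ i, ∑ j,
        (((2 : ℝ) • W - ρ • (1 : Matrix (Fin N) (Fin N) ℝ)) i j) ^ 2) + 1))
    (X : Matrix (Fin k) (Fin N) ℝ)
    (hXpos : ∀ i j, 0 < X i j) (hXcol : ∀ j, ∑ i, X i j = 1)
    (Xp : Matrix (Fin k) (Fin N) ℝ)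
    (hXppos : ∀ i j, 0 < Xp i j) (hXpcol : ∀ j, ∑ i, Xp i j = 1)
    (hmin : ∀ Y : Matrix (Fin k) (Fin N) ℝ,
      (∀ i j, 0 ≤ Y i j) → (∀ j, ∑ i, Y i j = 1) →
        (∑ i, ∑ j, (X * ((2 : ℝ) • W - ρ • (1 : Matrix (Fin N) (Fin N) ℝ))) i j
              * Xp i j)
            + (1 / t) * ∑ i, ∑ j, Xp i j * Real.log (Xp i j / X i j)
          ≤ (∑ i, ∑ j, (X * ((2 : ℝ) • W - ρ • (1 : Matrix (Fin N) (Fin N) ℝ))) i j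
              * Y i j)
            + (1 / t) * ∑ i, ∑ j, Y i j * Real.log (Y i j / X i j)) :
    Matrix.trace (Xp * (W - (ρ / 2) • 1) * Xpᵀ) + N * ρ / 2
      ≤ Matrix.trace (X * (W - (ρ / 2) • 1) * Xᵀ) + N * ρ / 2
        - (1 / t - Real.sqrt (∑ i, ∑ j,
            (((2 : ℝ) • W - ρ • (1 : Matrix (Fin N) (Fin N) ℝ)) i j) ^ 2))
          * ∑ i, ∑ j, Xp i j * Real.log (Xp i j / X i j) := by
  set A := (2 : ℝ) • W - ρ • (1 : Matrix (Fin N) (Fin N) ℝ) with hA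
  set B := W - (ρ/2) • (1 : Matrix (Fin N) (Fin N) ℝ) with hB
  set D := Xp - X with hD
  set L := Real.sqrt (∑ i, ∑ j, (A i j)^2) with hL
  set KL := ∑ i, ∑ j, Xp i j * Real.log (Xp i j / X i j) with hKL
  have hL0 : 0 ≤ L := Real.sqrt_nonneg _
  have hA2B : A = (2:ℝ) • B := by
    rw [hA, hB]; ext i j
    simp [Matrix.sub_apply, Matrix.smul_apply]; ring
  have hBT : Bᵀ = B := by
    rw [hB, Matrix.transpose_sub, Matrix.transpose_smul, Matrix.transpose_one, hW.eq]
  have hXpXD : Xp = X + D := by rw [hD]; abel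
  -- entries bounded by 1
  have hXle1 : ∀ i j, X i j ≤ 1 := fun i j => by
    rw [← hXcol j]; exact Finset.single_le_sum (fun m _ => (hXpos m j).le) (Finset.mem_univ i)
  have hXple1 : ∀ i j, Xp i j ≤ 1 := fun i j => by
    rw [← hXpcol j]; exact Finset.single_le_sum (fun m _ => (hXppos m j).le) (Finset.mem_univ i)
  -- Pinsker-type bound
  have pinsker : ∑ i, ∑ j, (D i j)^2 ≤ 2 * KL := by
    have h1 : ∀ i j, (Xp i j - X i j) + (Xp i j - X i j)^2/2
        ≤ Xp i j * Real.log (Xp i j / X i j) := fun i j => by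
      have := kl_pointwise (hXppos i j) (hXple1 i j) (hXpos i j) (hXle1 i j)
      linarith
    have h2 : ∑ i, ∑ j, ((Xp i j - X i j) + (Xp i j - X i j)^2/2) ≤ KL :=
      Finset.sum_le_sum fun i _ => Finset.sum_le_sum fun j _ => h1 i j
    have h3 : ∑ i, ∑ j, (Xp i j - X i j) = (0:ℝ) := by
      rw [Finset.sum_comm]
      apply Finset.sum_eq_zero; intro j _
      rw [Finset.sum_sub_distrib, hXpcol, hXcol, sub_self]
    have h4 : ∑ i, ∑ j, ((Xp i j - X i j) + (Xp i j - X i j)^2/2)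
        = ∑ i, ∑ j, (Xp i j - X i j) + ∑ i, ∑ j, (Xp i j - X i j)^2/2 := by
      rw [← Finset.sum_add_distrib]
      apply Finset.sum_congr rfl; intro i _
      rw [← Finset.sum_add_distrib]
    have h5 : ∑ i, ∑ j, (D i j)^2 = 2 * ∑ i, ∑ j, (Xp i j - X i j)^2/2 := by
      rw [Finset.mul_sum]
      apply Finset.sum_congr rfl; intro i _
      rw [Finset.mul_sum]
      apply Finset.sum_congr rfl; intro j _
      rw [hD]; simp [Matrix.sub_apply]; ring
    rw [h4, h3, zero_add] at h2
    linarith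
  -- trace expansion
  have hsym : Matrix.trace (D * B * Xᵀ) = Matrix.trace (X * B * Dᵀ) := by
    rw [← Matrix.trace_transpose (D * B * Xᵀ), Matrix.transpose_mul, Matrix.transpose_mul,
      Matrix.transpose_transpose, hBT, ← Matrix.mul_assoc]
  have expand : Matrix.trace (Xp * B * Xpᵀ)
      = Matrix.trace (X * B * Xᵀ) + Matrix.trace (X * A * Dᵀ) + Matrix.trace (D * B * Dᵀ) := by
    rw [hXpXD]
    simp only [Matrix.add_mul, Matrix.mul_add, Matrix.transpose_add, Matrix.trace_add]
    rw [hA2B]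
    simp only [Matrix.smul_mul, Matrix.mul_smul, Matrix.trace_smul, smul_eq_mul]
    rw [hsym]; ring
  -- inner-product term
  have hinner : Matrix.trace (X * A * Dᵀ)
      = (∑ i, ∑ j, (X * A) i j * Xp i j) - (∑ i, ∑ j, (X * A) i j * X i j) := by
    rw [trace_mul_transpose (X * A) D]
    rw [← Finset.sum_sub_distrib]
    apply Finset.sum_congr rfl; intro i _
    rw [← Finset.sum_sub_distrib]
    apply Finset.sum_congr rfl; intro j _
    rw [hD]; simp [Matrix.sub_apply]; ring
  -- step bound from minimality
  have hKLX0 : ∑ i, ∑ j, X i j * Real.log (X i j / X i j) = 0 := by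
    apply Finset.sum_eq_zero; intro i _
    apply Finset.sum_eq_zero; intro j _
    rw [div_self (hXpos i j).ne', Real.log_one, mul_zero]
  have hstep := hmin X (fun i j => (hXpos i j).le) hXcol
  rw [hKLX0, mul_zero, add_zero] at hstep
  -- quadratic term bound
  have hquad : Matrix.trace (D * B * Dᵀ) ≤ L * KL := by
    have e1 : Matrix.trace (D * B * Dᵀ) = ∑ j, ∑ l, B j l * (∑ i, D i j * D i l) :=
      trace_quad B D
    have e2 : ∑ j, ∑ l, B j l * (∑ i, D i j * D i l)
        = (1/2) * ∑ j, ∑ l, A j l * (∑ i, D i j * D i l) := by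
      rw [Finset.mul_sum]
      apply Finset.sum_congr rfl; intro j _
      rw [Finset.mul_sum]
      apply Finset.sum_congr rfl; intro l _
      rw [hA2B]; simp [Matrix.smul_apply]; ring
    have e3 := cs_bound A D
    have e4 : L * (∑ i, ∑ j, (D i j)^2) ≤ L * (2 * KL) :=
      mul_le_mul_of_nonneg_left pinsker hL0
    have e3' : ∑ j, ∑ l, A j l * (∑ i, D i j * D i l) ≤ L * ∑ i, ∑ j, (D i j)^2 := e3
    rw [e1, e2]
    nlinarith [e3', e4]
  -- combine
  have hfin : (1/t - L) * KL = (1/t) * KL - L * KL := by ring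
  rw [expand, hinner]
  linarith [hstep, hquad, hfin]
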